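/- Let m ≥ 1 be a real number. For all real numbers x, y, one has (x - y)(|x|^{m-1} x - |y|^{m-1} y) ≥ (4m/(m+1)^2) (|x|^{(m+1)/2} - |y|^{(m+1)/2})^2. -/

import Mathlib

open MeasureTheory intervalIntegral

/-- Cauchy–Schwarz with g = 1: (∫ f)² ≤ (a - b) ∫ f², where `g` is a pointwise
version of `f ^ 2` on the interval. -/
lemma cs_aux (f g : ℝ → ℝ) (a b : ℝ) (hab : b ≤ a)
    (hf : IntervalIntegrable f volume b a) (hg : IntervalIntegrable g volume b a)
    (hfg : ∀ t ∈ Set.uIcc b a, f t ^ 2 = g t) :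
    (∫ t in b..a, f t) ^ 2 ≤ (a - b) * ∫ t in b..a, g t := by
  rcases eq_or_lt_of_le hab with rfl | hlt
  · simp
  set d : ℝ := a - b with hd
  have hdpos : 0 < d := by simp [hd]; linarith
  set l : ℝ := (∫ t in b..a, f t) / d with hl
  have h0 : 0 ≤ ∫ t in b..a, (f t - l) ^ 2 :=
    intervalIntegral.integral_nonneg hab fun t _ => sq_nonneg _
  have hexp : ∫ t in b..a, (f t - l) ^ 2
      = (∫ t in b..a, g t) - 2 * l * (∫ t in b..a, f t) + d * l ^ 2 := by
    have hcongr : ∫ t in b..a, (f t - l) ^ 2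
        = ∫ t in b..a, (g t - 2 * l * f t + l ^ 2) := by
      apply intervalIntegral.integral_congr
      intro t ht
      have := hfg t ht
      ring_nf
      nlinarith [hfg t ht]
    rw [hcongr]
    have h1 : IntervalIntegrable (fun t => 2 * l * f t) volume b a := hf.const_mul _
    have h2 : IntervalIntegrable (fun _ : ℝ => l ^ 2) volume b a :=
      intervalIntegrable_const
    rw [intervalIntegral.integral_add (hg.sub h1) h2,
      intervalIntegral.integral_sub hg h1, intervalIntegral.integral_const_mul,
      intervalIntegral.integral_const]
    simp [hd, smul_eq_mul]
  rw [hexp] at h0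
  have hl2 : l * d = ∫ t in b..a, f t := by
    rw [hl, div_mul_cancel₀ _ hdpos.ne']
  nlinarith [h0, hdpos, sq_nonneg l]

/-- Helper: `(t ^ c) ^ 2 = t ^ (c * 2)` for `0 ≤ t` (rpow). -/
lemma sq_rpow (t c : ℝ) (ht : 0 ≤ t) : (t ^ c) ^ 2 = t ^ (c * 2) := by
  rw [Real.rpow_mul ht, Real.rpow_two]

/-- Key inequality for nonnegative arguments. -/
lemma key_nonneg (m : ℝ) (hm : 1 ≤ m) (a b : ℝ) (hb : 0 ≤ b) (hab : b ≤ a) :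
    (4 * m / (m + 1) ^ 2) * (a ^ ((m + 1) / 2) - b ^ ((m + 1) / 2)) ^ 2 ≤
      (a - b) * (a ^ m - b ^ m) := by
  set p : ℝ := (m + 1) / 2 with hp
  have hm0 : 0 < m := by linarith
  have hp1 : 1 ≤ p := by rw [hp]; linarith
  have hp0 : 0 < p := by linarith
  have hf : IntervalIntegrable (fun t : ℝ => t ^ (p - 1)) volume b a :=
    intervalIntegral.intervalIntegrable_rpow (Or.inl (by linarith))
  have hg : IntervalIntegrable (fun t : ℝ => t ^ (m - 1)) volume b a :=
    intervalIntegral.intervalIntegrable_rpow (Or.inl (by linarith))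
  have hfg : ∀ t ∈ Set.uIcc b a, (t ^ (p - 1)) ^ 2 = t ^ (m - 1) := by
    intro t ht
    rw [Set.uIcc_of_le hab] at ht
    have ht0 : 0 ≤ t := le_trans hb ht.1
    rw [sq_rpow t (p - 1) ht0]
    congr 1
    rw [hp]; ring
  have hcs := cs_aux (fun t : ℝ => t ^ (p - 1)) (fun t : ℝ => t ^ (m - 1)) a b hab hf hg hfg
  have I1 : (∫ t in b..a, t ^ (p - 1)) = (a ^ p - b ^ p) / p := by
    rw [integral_rpow (Or.inl (by linarith : (-1 : ℝ) < p - 1))]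
    norm_num
  have I2 : (∫ t in b..a, t ^ (m - 1)) = (a ^ m - b ^ m) / m := by
    rw [integral_rpow (Or.inl (by linarith : (-1 : ℝ) < m - 1))]
    norm_num
  rw [I1, I2] at hcs
  have hps : (m + 1) ^ 2 = 4 * p ^ 2 := by rw [hp]; ring
  rw [hps]
  have h4p : (0:ℝ) < 4 * p ^ 2 := by positivity
  rw [div_mul_eq_mul_div, div_le_iff₀ h4p]
  have := mul_le_mul_of_nonneg_left hcs (le_of_lt (mul_pos hm0 (by positivity : (0:ℝ) < p^2)))
  calc 4 * m * (a ^ p - b ^ p) ^ 2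
      = (m * p ^ 2) * (((a ^ p - b ^ p) / p) ^ 2) * 4 := by field_simp
    _ ≤ (m * p ^ 2) * ((a - b) * ((a ^ m - b ^ m) / m)) * 4 := by nlinarith [this]
    _ = (a - b) * (a ^ m - b ^ m) * (4 * p ^ 2) := by field_simp

/-- Key inequality for mixed signs: `x = a ≥ 0`, `y = -b ≤ 0`. -/
lemma key_mixed (m : ℝ) (hm : 1 ≤ m) (a b : ℝ) (ha : 0 ≤ a) (hb : 0 ≤ b) :
    (4 * m / (m + 1) ^ 2) * (a ^ ((m + 1) / 2) - b ^ ((m + 1) / 2)) ^ 2 ≤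
      (a + b) * (a ^ m + b ^ m) := by
  set p : ℝ := (m + 1) / 2 with hp
  have hc1 : 4 * m / (m + 1) ^ 2 ≤ 1 := by
    rw [div_le_one (by positivity)]
    nlinarith [sq_nonneg (m - 1)]
  have hc0 : 0 ≤ 4 * m / (m + 1) ^ 2 := by positivity
  have ha2 : (a ^ p) ^ 2 = a ^ m * a := by
    rw [sq_rpow a p ha]
    have : p * 2 = m + 1 := by rw [hp]; ring
    rw [this, Real.rpow_add' ha (by linarith : m + 1 ≠ 0), Real.rpow_one]
  have hb2 : (b ^ p) ^ 2 = b ^ m * b := by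
    rw [sq_rpow b p hb]
    have : p * 2 = m + 1 := by rw [hp]; ring
    rw [this, Real.rpow_add' hb (by linarith : m + 1 ≠ 0), Real.rpow_one]
  have hsq : (a ^ p - b ^ p) ^ 2 ≤ (a + b) * (a ^ m + b ^ m) := by
    have h1 : 0 ≤ a ^ p * b ^ p := by positivity
    have h2 : 0 ≤ a ^ m * b := by positivity
    have h3 : 0 ≤ b ^ m * a := by positivity
    nlinarith [ha2, hb2]
  calc (4 * m / (m + 1) ^ 2) * (a ^ p - b ^ p) ^ 2
      ≤ 1 * (a ^ p - b ^ p) ^ 2 := by nlinarith [sq_nonneg (a ^ p - b ^ p)]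
    _ ≤ (a + b) * (a ^ m + b ^ m) := by linarith

lemma rpow_pred_mul (c a : ℝ) (ha : 0 ≤ a) (hc : c + 1 ≠ 0) :
    a ^ c * a = a ^ (c + 1) := by
  rw [Real.rpow_add' ha hc, Real.rpow_one]

lemma main_le (m : ℝ) (hm : 1 ≤ m) (x y : ℝ) (hxy : y ≤ x) :
    (x - y) * (|x| ^ (m - 1) * x - |y| ^ (m - 1) * y) ≥
      (4 * m / (m + 1) ^ 2) * (|x| ^ ((m + 1) / 2) - |y| ^ ((m + 1) / 2)) ^ 2 := by
  have hm1 : m - 1 + 1 ≠ 0 := by intro h; nlinarith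
  rcases le_or_gt 0 y with hy | hy
  · -- both nonnegative
    have hx : 0 ≤ x := le_trans hy hxy
    rw [abs_of_nonneg hx, abs_of_nonneg hy]
    have e1 : x ^ (m - 1) * x = x ^ m := by
      rw [rpow_pred_mul (m - 1) x hx hm1]; norm_num
    have e2 : y ^ (m - 1) * y = y ^ m := by
      rw [rpow_pred_mul (m - 1) y hy hm1]; norm_num
    have hk := key_nonneg m hm x y hy hxy
    have heq : (x - y) * (x ^ (m - 1) * x - y ^ (m - 1) * y)
        = (x - y) * (x ^ m - y ^ m) := by rw [e1, e2]
    linarith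
  · rcases le_or_gt 0 x with hx | hx
    · -- x ≥ 0 > y : mixed signs
      obtain ⟨b, rfl⟩ : ∃ b, y = -b := ⟨-y, by ring⟩
      have hb : 0 ≤ b := by linarith
      rw [abs_neg, abs_of_nonneg hx, abs_of_nonneg hb]
      have e1 : x ^ (m - 1) * x = x ^ m := by
        rw [rpow_pred_mul (m - 1) x hx hm1]; norm_num
      have e2 : b ^ (m - 1) * b = b ^ m := by
        rw [rpow_pred_mul (m - 1) b hb hm1]; norm_num
      have hk := key_mixed m hm x b hx hb
      have heq : (x - -b) * (x ^ (m - 1) * x - b ^ (m - 1) * -b)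
          = (x + b) * (x ^ m + b ^ m) := by rw [← e1, ← e2]; ring
      linarith
    · -- both negative
      obtain ⟨u, rfl⟩ : ∃ u, x = -u := ⟨-x, by ring⟩
      obtain ⟨v, rfl⟩ : ∃ v, y = -v := ⟨-y, by ring⟩
      have hu : 0 ≤ u := by linarith
      have huv : u ≤ v := by linarith
      rw [abs_neg, abs_neg, abs_of_nonneg hu, abs_of_nonneg (le_trans hu huv)]
      have e1 : u ^ (m - 1) * u = u ^ m := by
        rw [rpow_pred_mul (m - 1) u hu hm1]; norm_num
      have e2 : v ^ (m - 1) * v = v ^ m := by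
        rw [rpow_pred_mul (m - 1) v (le_trans hu huv) hm1]; norm_num
      have hk := key_nonneg m hm v u hu huv
      have heq : (-u - -v) * (u ^ (m - 1) * -u - v ^ (m - 1) * -v)
          = (v - u) * (v ^ m - u ^ m) := by rw [← e1, ← e2]; ring
      have heq2 : (u ^ ((m + 1) / 2) - v ^ ((m + 1) / 2)) ^ 2
          = (v ^ ((m + 1) / 2) - u ^ ((m + 1) / 2)) ^ 2 := by ring
      linarith

/-- Pointwise inequality: for m ≥ 1 and all reals x, y,
(x - y)(|x|^{m-1} x - |y|^{m-1} y) ≥ (4m/(m+1)²)(|x|^{(m+1)/2} - |y|^{(m+1)/2})². -/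
theorem stmt0 (m : ℝ) (hm : 1 ≤ m) (x y : ℝ) :
    (x - y) * (|x| ^ (m - 1) * x - |y| ^ (m - 1) * y) ≥
      (4 * m / (m + 1) ^ 2) * (|x| ^ ((m + 1) / 2) - |y| ^ ((m + 1) / 2)) ^ 2 := by
  rcases le_total y x with h | h
  · exact main_le m hm x y h
  · have hk := main_le m hm y x h
    have heq : (y - x) * (|y| ^ (m - 1) * y - |x| ^ (m - 1) * x)
        = (x - y) * (|x| ^ (m - 1) * x - |y| ^ (m - 1) * y) := by ring
    have heq2 : (|y| ^ ((m + 1) / 2) - |x| ^ ((m + 1) / 2)) ^ 2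
        = (|x| ^ ((m + 1) / 2) - |y| ^ ((m + 1) / 2)) ^ 2 := by ring
    linarith
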